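/- For j : z → so(v) of Heisenberg type with dim v = m, dim z = r, the Ricci operator of g(j) is -r/2 · Id on v and m/4 · Id on z. -/

import Mathlib

open scoped RealInnerProductSpace

/-- For `j : z → so(v)` of Heisenberg type with `dim v = m`, `dim z = r`, the Ricci
operator of `g(j)` is `-r/2 · Id` on `v` and `m/4 · Id` on `z`; i.e. `½J = -(r/2)·Id`
(where `J = Σ_α j_{Z_α}²`) and `ric(Z,W) = -¼Tr(j_Z j_W) = (m/4)⟨Z,W⟩`. -/
theorem stmt18 (m r : ℕ)
    (j : EuclideanSpace ℝ (Fin r) →ₗ[ℝ] Module.End ℝ (EuclideanSpace ℝ (Fin m)))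
    (hskew : ∀ (z : EuclideanSpace ℝ (Fin r)) (x y : EuclideanSpace ℝ (Fin m)),
      ⟪j z x, y⟫ = -⟪x, j z y⟫)
    (hheis : ∀ z, j z * j z
      = -(‖z‖ ^ 2 : ℝ) • (1 : Module.End ℝ (EuclideanSpace ℝ (Fin m)))) :
    ((1/2 : ℝ) • ∑ α : Fin r,
        j (EuclideanSpace.single α 1) * j (EuclideanSpace.single α 1)
      = -((r : ℝ)/2) • (1 : Module.End ℝ (EuclideanSpace ℝ (Fin m))))
    ∧ (∀ Z W : EuclideanSpace ℝ (Fin r),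
        -(1/4) * LinearMap.trace ℝ (EuclideanSpace ℝ (Fin m)) (j Z * j W)
          = ((m : ℝ)/4) * ⟪Z, W⟫) := by
  constructor
  · have h1 : ∀ α : Fin r, j (EuclideanSpace.single α 1) * j (EuclideanSpace.single α 1)
        = (-1 : ℝ) • (1 : Module.End ℝ (EuclideanSpace ℝ (Fin m))) := by
      intro α
      rw [hheis]
      norm_num [EuclideanSpace.norm_single]
    rw [Finset.sum_congr rfl (fun α _ => h1 α), Finset.sum_const, Finset.card_univ,
      Fintype.card_fin, ← Nat.cast_smul_eq_nsmul ℝ, smul_smul, smul_smul]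
    congr 1
    ring
  · intro Z W
    have key : j Z * j W + j W * j Z
        = (-(2 * ⟪Z, W⟫)) • (1 : Module.End ℝ (EuclideanSpace ℝ (Fin m))) := by
      have h := hheis (Z + W)
      rw [map_add, add_mul, mul_add, mul_add, hheis Z, hheis W,
        @norm_add_sq_real] at h
      have h2 : j Z * j W + j W * j Z
          = (-(‖Z‖ ^ 2 + 2 * ⟪Z, W⟫ + ‖W‖ ^ 2)) • (1 : Module.End ℝ (EuclideanSpace ℝ (Fin m)))
            - (-(‖Z‖ ^ 2 : ℝ)) • 1 - (-(‖W‖ ^ 2 : ℝ)) • 1 := by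
        rw [← h]; abel
      rw [h2, ← sub_smul, ← sub_smul]
      congr 1
      ring
    have htr : LinearMap.trace ℝ (EuclideanSpace ℝ (Fin m)) (j Z * j W)
        = -(m : ℝ) * ⟪Z, W⟫ := by
      have := congrArg (LinearMap.trace ℝ (EuclideanSpace ℝ (Fin m))) key
      rw [map_add, map_smul, LinearMap.trace_one, finrank_euclideanSpace_fin,
        LinearMap.trace_mul_comm, smul_eq_mul] at this
      have h3 : (2 : ℝ) * LinearMap.trace ℝ (EuclideanSpace ℝ (Fin m)) (j W * j Z)
          = -(2 * ⟪Z, W⟫) * m := by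
        rw [two_mul, this]
      rw [LinearMap.trace_mul_comm]
      linarith
    rw [htr]
    ring
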